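/- In the polynomial ring ℤ[1/3][a₁, a₃, s, t], let b₁ = a₁ + 2s and b₃ = a₃ + (1/3)a₁s² + (1/3)a₁²s + 2t, and let r₁ = s⁴ − 6st + a₁s³ − 3a₁t − 3a₃s. Then b₁⁴ − 24·b₁·b₃ = (a₁⁴ − 24·a₁·a₃) + 16·r₁. In particular, the modular form c₄ = a₁⁴ − 24a₁a₃ is invariant under the right unit η_R of the 2-primary cubic Hopf algebroid modulo the relation ideal. -/

import Mathlib

open MvPolynomial

/-- In `ℤ[1/3][a₁, a₃, s, t]` (formalized as a polynomial ring over any commutative ring `R`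
in which `3` is invertible), with `b₁ = η_R(a₁) = a₁ + 2s`,
`b₃ = η_R(a₃) = a₃ + (1/3)a₁s² + (1/3)a₁²s + 2t`, and
`r₁ = s⁴ − 6st + a₁s³ − 3a₁t − 3a₃s`, one has the polynomial identity
`b₁⁴ − 24·b₁·b₃ = (a₁⁴ − 24·a₁·a₃) + 16·r₁`; in particular `c₄` is invariant under the
right unit of the 2-primary cubic Hopf algebroid modulo the relation ideal. -/
theorem stmt2 {R : Type*} [CommRing R] (u3 : R) (h3 : 3 * u3 = 1)
    (a1 a3 s t b1 b3 r1 : MvPolynomial (Fin 4) R)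
    (ha1 : a1 = X 0) (ha3 : a3 = X 1) (hs : s = X 2) (ht : t = X 3)
    (hb1 : b1 = a1 + 2 * s)
    (hb3 : b3 = a3 + C u3 * a1 * s ^ 2 + C u3 * a1 ^ 2 * s + 2 * t)
    (hr1 : r1 = s ^ 4 - 6 * s * t + a1 * s ^ 3 - 3 * a1 * t - 3 * a3 * s) :
    b1 ^ 4 - 24 * b1 * b3 = (a1 ^ 4 - 24 * a1 * a3) + 16 * r1 := by
  have hC : (3 : MvPolynomial (Fin 4) R) * C u3 = 1 := by
    have := congrArg (C : R → MvPolynomial (Fin 4) R) h3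
    rw [map_mul, map_ofNat, map_one] at this
    exact this
  subst hb1 hb3 hr1
  linear_combination (-8 * (a1 + 2*s) * (a1*s^2 + a1^2*s)) * hC
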